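/- The spectral gap of the spin-J XXZ chain in sector M admits the ladder representation γ([1,L],J,M) = 2J · inf { ⟨P_{[1,L]}ψ, H̿ P_{[1,L]}ψ⟩ / ⟨P_{[1,L]}ψ, P_{[1,L]}ψ⟩ : ψ ∈ ℋ(Λ̃,M), P_{[1,L]}ψ ≠ 0, ψ ⊥ 𝒢(Λ̃,M) }. -/

import Mathlib

open scoped BigOperators Classical

noncomputable section

namespace XXZ

/-- `m`-value of the basis index `k` for spin `J = twoJ/2`: `m = k - twoJ/2`. -/
def mval (twoJ : ℕ) (k : Fin (twoJ + 1)) : ℝ := (k : ℝ) - (twoJ : ℝ) / 2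

/-- The third spin matrix `S³` for spin `J = twoJ/2`. -/
def S3 (twoJ : ℕ) : Matrix (Fin (twoJ + 1)) (Fin (twoJ + 1)) ℂ :=
  Matrix.diagonal fun k => ((mval twoJ k : ℝ) : ℂ)

/-- The raising operator `S⁺`. -/
def Splus (twoJ : ℕ) : Matrix (Fin (twoJ + 1)) (Fin (twoJ + 1)) ℂ :=
  Matrix.of fun k' k => if (k' : ℕ) = (k : ℕ) + 1 then
    ((Real.sqrt ((twoJ : ℝ) / 2 * ((twoJ : ℝ) / 2 + 1) - mval twoJ k * (mval twoJ k + 1)) : ℝ) : ℂ)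
  else 0

/-- The lowering operator `S⁻`. -/
def Sminus (twoJ : ℕ) : Matrix (Fin (twoJ + 1)) (Fin (twoJ + 1)) ℂ :=
  Matrix.of fun k' k => if (k' : ℕ) + 1 = (k : ℕ) then
    ((Real.sqrt ((twoJ : ℝ) / 2 * ((twoJ : ℝ) / 2 + 1) - mval twoJ k * (mval twoJ k - 1)) : ℝ) : ℂ)
  else 0

/-- `S¹ = (S⁺ + S⁻)/2`. -/
def S1 (twoJ : ℕ) : Matrix (Fin (twoJ + 1)) (Fin (twoJ + 1)) ℂ :=
  (2 : ℂ)⁻¹ • (Splus twoJ + Sminus twoJ)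

/-- `S² = (S⁺ - S⁻)/(2i)`. -/
def S2 (twoJ : ℕ) : Matrix (Fin (twoJ + 1)) (Fin (twoJ + 1)) ℂ :=
  (2 * Complex.I)⁻¹ • (Splus twoJ - Sminus twoJ)

/-- A single-site operator `A` acting at the site `α` of a many-site system. -/
def oneSite {ι : Type*} [Fintype ι] [DecidableEq ι] {d : ℕ}
    (A : Matrix (Fin d) (Fin d) ℂ) (α : ι) :
    Matrix (ι → Fin d) (ι → Fin d) ℂ :=
  Matrix.of fun σ τ => A (σ α) (τ α) *
    ∏ β ∈ Finset.univ.filter (fun β => β ≠ α), (if σ β = τ β then (1 : ℂ) else 0)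

/-- The XXZ interaction `h^J(α,β)` for spin `J = twoJ/2` with anisotropy `Δ`:
`h = J²·1 − S³_α S³_β − Δ⁻¹(S¹_α S¹_β + S²_α S²_β) + J√(1−Δ⁻²)(S³_α − S³_β)`. -/
def hInt (twoJ : ℕ) (Δ : ℝ) {ι : Type*} [Fintype ι] [DecidableEq ι] (α β : ι) :
    Matrix (ι → Fin (twoJ + 1)) (ι → Fin (twoJ + 1)) ℂ :=
  ((((twoJ : ℝ) / 2) ^ 2 : ℝ) : ℂ) • (1 : Matrix (ι → Fin (twoJ + 1)) (ι → Fin (twoJ + 1)) ℂ)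
    - oneSite (S3 twoJ) α * oneSite (S3 twoJ) β
    - ((Δ⁻¹ : ℝ) : ℂ) • (oneSite (S1 twoJ) α * oneSite (S1 twoJ) β
        + oneSite (S2 twoJ) α * oneSite (S2 twoJ) β)
    + (((twoJ : ℝ) / 2 * Real.sqrt (1 - Δ⁻¹ ^ 2) : ℝ) : ℂ) •
        (oneSite (S3 twoJ) α - oneSite (S3 twoJ) β)

/-- The spin-`J` XXZ chain Hamiltonian `H^J_{[1,L]} = Σ_{α=1}^{L-1} h^J(α,α+1)`. -/
def Hchain (twoJ L : ℕ) (Δ : ℝ) :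
    Matrix (Fin L → Fin (twoJ + 1)) (Fin L → Fin (twoJ + 1)) ℂ :=
  ∑ x : Fin L, if h : (x : ℕ) + 1 < L then hInt twoJ Δ x ⟨(x : ℕ) + 1, h⟩ else 0

/-- Total third component of spin `S³_tot = Σ_α S³_α`. -/
def S3tot (twoJ : ℕ) {ι : Type*} [Fintype ι] [DecidableEq ι] :
    Matrix (ι → Fin (twoJ + 1)) (ι → Fin (twoJ + 1)) ℂ :=
  ∑ α : ι, oneSite (S3 twoJ) α

/-- The standard inner product, antilinear in the first argument. -/
def ip {n : Type*} [Fintype n] (v w : n → ℂ) : ℂ :=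
  ∑ i, (starRingEnd ℂ) (v i) * w i

/-- `ψ` lies in the sector of total `S³`-eigenvalue `M`. -/
def inSector (twoJ : ℕ) {ι : Type*} [Fintype ι] [DecidableEq ι]
    (M : ℝ) (ψ : (ι → Fin (twoJ + 1)) → ℂ) : Prop :=
  (S3tot twoJ).mulVec ψ = (M : ℂ) • ψ

/-- The spectral gap `γ([1,L],J,M)`: the infimum of the Rayleigh quotient of `H^J_{[1,L]}`
over nonzero vectors of the sector `M` orthogonal to the kernel of `H^J_{[1,L]}` in that
sector. -/
def gap (twoJ L : ℕ) (Δ M : ℝ) : ℝ :=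
  sInf { r : ℝ | ∃ ψ : (Fin L → Fin (twoJ + 1)) → ℂ, ψ ≠ 0 ∧
    inSector twoJ M ψ ∧
    (∀ φ : (Fin L → Fin (twoJ + 1)) → ℂ,
      (Hchain twoJ L Δ).mulVec φ = 0 → inSector twoJ M φ → ip φ ψ = 0) ∧
    r = (ip ψ ((Hchain twoJ L Δ).mulVec ψ)).re / (ip ψ ψ).re }

/-- The full spin-1/2 ladder Hamiltonian `H̃` with `2J` legs. -/
def Hladder (twoJ L : ℕ) (Δ : ℝ) :
    Matrix ((Fin L × Fin twoJ) → Fin (1 + 1)) ((Fin L × Fin twoJ) → Fin (1 + 1)) ℂ :=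
  ∑ x : Fin L, ∑ j : Fin twoJ, ∑ k : Fin twoJ,
    if h : (x : ℕ) + 1 < L then hInt 1 Δ (x, j) ((⟨(x : ℕ) + 1, h⟩ : Fin L), k) else 0

/-- The decoupled spin-1/2 ladder Hamiltonian `H̿` (2J disjoint spin-1/2 chains). -/
def Hdec (twoJ L : ℕ) (Δ : ℝ) :
    Matrix ((Fin L × Fin twoJ) → Fin (1 + 1)) ((Fin L × Fin twoJ) → Fin (1 + 1)) ℂ :=
  ∑ x : Fin L, ∑ j : Fin twoJ,
    if h : (x : ℕ) + 1 < L then hInt 1 Δ (x, j) ((⟨(x : ℕ) + 1, h⟩ : Fin L), j) else 0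

/-- The orthogonal projection `P_{[1,L]} = Π_α P_α` onto tensors symmetric under
permutations within each rung `{α}×[1,2J]` (the average of the rung-permutation
unitaries). -/
def Psym (twoJ L : ℕ) :
    Matrix ((Fin L × Fin twoJ) → Fin (1 + 1)) ((Fin L × Fin twoJ) → Fin (1 + 1)) ℂ :=
  ((Nat.factorial twoJ : ℂ) ^ L)⁻¹ •
    ∑ π : Fin L → Equiv.Perm (Fin twoJ),
      Matrix.of fun σ τ =>
        if (∀ p : Fin L × Fin twoJ, τ p = σ (p.1, (π p.1) p.2)) then (1 : ℂ) else 0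

/-- Membership in the ground state space `𝒢(Λ̃,M) = ker H̃ ∩ ℋ(Λ̃,M)`. -/
def inG (twoJ L : ℕ) (Δ M : ℝ) (ψ : ((Fin L × Fin twoJ) → Fin (1 + 1)) → ℂ) : Prop :=
  (Hladder twoJ L Δ).mulVec ψ = 0 ∧ inSector 1 M ψ

/-- Membership in `ℋ₀(Λ̃,M) = ker H̿ ∩ ℋ(Λ̃,M)`. -/
def inH0 (twoJ L : ℕ) (Δ M : ℝ) (ψ : ((Fin L × Fin twoJ) → Fin (1 + 1)) → ℂ) : Prop :=
  (Hdec twoJ L Δ).mulVec ψ = 0 ∧ inSector 1 M ψ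

/-- Membership in `ℋ_{0,⊥}(Λ̃,M) = ℋ₀(Λ̃,M) ∩ 𝒢(Λ̃,M)^⊥`. -/
def inH0perp (twoJ L : ℕ) (Δ M : ℝ) (ψ : ((Fin L × Fin twoJ) → Fin (1 + 1)) → ℂ) : Prop :=
  inH0 twoJ L Δ M ψ ∧ ∀ φ, inG twoJ L Δ M φ → ip φ ψ = 0

/-- `δ([1,L],J,M) = sup{⟨ψ, P_{[1,L]} ψ⟩/⟨ψ,ψ⟩ : 0 ≠ ψ ∈ ℋ_{0,⊥}(Λ̃,M)}`
(`sSup ∅ = 0` in ℝ, matching the convention that `δ = 0` if `ℋ_{0,⊥} = {0}`). -/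
def delta (twoJ L : ℕ) (Δ M : ℝ) : ℝ :=
  sSup { r : ℝ | ∃ ψ : ((Fin L × Fin twoJ) → Fin (1 + 1)) → ℂ, ψ ≠ 0 ∧
    inH0perp twoJ L Δ M ψ ∧
    r = (ip ψ ((Psym twoJ L).mulVec ψ)).re / (ip ψ ψ).re }

/-! ### Auxiliary machinery -/

open Matrix Finset
open scoped Pointwise

section OneSiteBasics

variable {ι : Type*} [Fintype ι] [DecidableEq ι] {d : ℕ}

lemma indicator_prod (σ τ : ι → Fin d) (p : ι) :
    (∏ β ∈ Finset.univ.filter (fun β => β ≠ p), (if σ β = τ β then (1:ℂ) else 0))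
      = if (∀ β, β ≠ p → σ β = τ β) then 1 else 0 := by
  rw [Finset.prod_boole]
  simp

lemma sum_eq_sum_update (σ : ι → Fin d) (p : ι) (F : (ι → Fin d) → ℂ) :
    ∑ ρ : ι → Fin d, (if (∀ β, β ≠ p → ρ β = σ β) then F ρ else 0)
      = ∑ s : Fin d, F (Function.update σ p s) := by
  classical
  rw [Finset.sum_ite, Finset.sum_const_zero, add_zero]
  have hset : Finset.univ.filter (fun ρ : ι → Fin d => ∀ β, β ≠ p → ρ β = σ β)
      = Finset.univ.image (fun s => Function.update σ p s) := by
    ext ρ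
    simp only [Finset.mem_filter, Finset.mem_univ, true_and, Finset.mem_image]
    constructor
    · intro h
      refine ⟨ρ p, ?_⟩
      funext β
      by_cases hβ : β = p
      · subst hβ; simp [Function.update]
      · rw [Function.update_of_ne hβ]; exact (h β hβ).symm
    · rintro ⟨s, rfl⟩ β hβ
      rw [Function.update_of_ne hβ]
  rw [hset, Finset.sum_image]
  intro a _ b _ hab
  have := congrFun hab p
  simpa using this

lemma oneSite_mul_apply {n : Type*} [Fintype n] (A : Matrix (Fin d) (Fin d) ℂ) (p : ι)
    (M : Matrix (ι → Fin d) n ℂ) (σ : ι → Fin d) (v : n) :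
    (oneSite A p * M) σ v = ∑ s : Fin d, A (σ p) s * M (Function.update σ p s) v := by
  rw [Matrix.mul_apply]
  have : ∀ ρ : ι → Fin d, oneSite A p σ ρ * M ρ v
      = (if (∀ β, β ≠ p → ρ β = σ β) then A (σ p) (ρ p) * M ρ v else 0) := by
    intro ρ
    rw [oneSite, Matrix.of_apply, indicator_prod]
    by_cases h : ∀ β, β ≠ p → σ β = ρ β
    · rw [if_pos h, if_pos fun β hβ => (h β hβ).symm, mul_one]
    · rw [if_neg h, if_neg fun h' => h fun β hβ => (h' β hβ).symm, mul_zero, zero_mul]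
  simp_rw [this]
  rw [sum_eq_sum_update]
  congr 1
  funext s
  rw [Function.update_self]

lemma mul_oneSite_apply {n : Type*} [Fintype n] (A : Matrix (Fin d) (Fin d) ℂ) (p : ι)
    (M : Matrix n (ι → Fin d) ℂ) (σ : n) (v : ι → Fin d) :
    (M * oneSite A p) σ v = ∑ s : Fin d, M σ (Function.update v p s) * A s (v p) := by
  rw [Matrix.mul_apply]
  have : ∀ ρ : ι → Fin d, M σ ρ * oneSite A p ρ v
      = (if (∀ β, β ≠ p → ρ β = v β) then M σ ρ * A (ρ p) (v p) else 0) := by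
    intro ρ
    rw [oneSite, Matrix.of_apply, indicator_prod]
    by_cases h : ∀ β, β ≠ p → ρ β = v β
    · rw [if_pos h, if_pos h]; ring
    · rw [if_neg h, if_neg h, mul_zero, mul_zero]
  simp_rw [this]
  rw [sum_eq_sum_update]
  congr 1
  funext s
  rw [Function.update_self]

lemma oneSite_add (A B : Matrix (Fin d) (Fin d) ℂ) (p : ι) :
    oneSite (A + B) p = oneSite A p + oneSite B p := by
  ext σ τ
  simp [oneSite, add_mul]

lemma oneSite_sub (A B : Matrix (Fin d) (Fin d) ℂ) (p : ι) :
    oneSite (A - B) p = oneSite A p - oneSite B p := by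
  ext σ τ
  simp [oneSite, sub_mul]

lemma oneSite_smul (c : ℂ) (A : Matrix (Fin d) (Fin d) ℂ) (p : ι) :
    oneSite (c • A) p = c • oneSite A p := by
  ext σ τ
  simp [oneSite, mul_assoc]

lemma oneSite_conjTranspose (A : Matrix (Fin d) (Fin d) ℂ) (p : ι) :
    (oneSite A p)ᴴ = oneSite Aᴴ p := by
  ext σ τ
  rw [Matrix.conjTranspose_apply, oneSite, oneSite, Matrix.of_apply, Matrix.of_apply,
    indicator_prod, indicator_prod, star_mul']
  congr 1
  · rw [apply_ite star, star_one, star_zero]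
    congr 1
    simp only [eq_iff_iff]
    constructor <;> intro h β hβ <;> exact (h β hβ).symm

lemma twoSite_apply (A B : Matrix (Fin d) (Fin d) ℂ) (p q : ι) (hpq : p ≠ q)
    (σ τ : ι → Fin d) :
    (oneSite A p * oneSite B q) σ τ = A (σ p) (τ p) * B (σ q) (τ q) *
      ∏ β ∈ Finset.univ.filter (fun β => β ≠ p ∧ β ≠ q), (if σ β = τ β then (1 : ℂ) else 0) := by
  rw [oneSite_mul_apply]
  have hfilter : Finset.univ.filter (fun β : ι => β ≠ q)
      = insert p (Finset.univ.filter (fun β => β ≠ p ∧ β ≠ q)) := by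
    ext β; by_cases hβ : β = p <;> simp [hβ, hpq]
  have key : ∀ s : Fin d, oneSite B q (Function.update σ p s) τ
      = (if s = τ p then (1:ℂ) else 0) * (B (σ q) (τ q) *
        ∏ β ∈ Finset.univ.filter (fun β => β ≠ p ∧ β ≠ q), (if σ β = τ β then (1 : ℂ) else 0)) := by
    intro s
    rw [oneSite, Matrix.of_apply, Function.update_of_ne (Ne.symm hpq), hfilter,
      Finset.prod_insert (by simp)]
    rw [Function.update_self]
    have : ∀ β ∈ Finset.univ.filter (fun β : ι => β ≠ p ∧ β ≠ q),
        (if Function.update σ p s β = τ β then (1:ℂ) else 0) = (if σ β = τ β then (1:ℂ) else 0) := by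
      intro β hβ
      rw [Finset.mem_filter] at hβ
      rw [Function.update_of_ne hβ.2.1]
    rw [Finset.prod_congr rfl this]
    ring
  simp_rw [key, ← mul_assoc, mul_ite, mul_one, mul_zero, ite_mul, zero_mul]
  rw [Finset.sum_ite_eq' Finset.univ (τ p)]
  simp [mul_assoc]

lemma oneSite_comm (A B : Matrix (Fin d) (Fin d) ℂ) (p q : ι) (hpq : p ≠ q) :
    oneSite A p * oneSite B q = oneSite B q * oneSite A p := by
  ext σ τ
  rw [twoSite_apply A B p q hpq, twoSite_apply B A q p hpq.symm]
  have : Finset.univ.filter (fun β : ι => β ≠ p ∧ β ≠ q)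
      = Finset.univ.filter (fun β : ι => β ≠ q ∧ β ≠ p) := by
    apply Finset.filter_congr; intro β _; simp [and_comm]
  rw [this]; ring

end OneSiteBasics
section Hermitian

lemma Splus_conjTranspose (twoJ : ℕ) : (Splus twoJ)ᴴ = Sminus twoJ := by
  ext k k'
  rw [Matrix.conjTranspose_apply]
  show star (Splus twoJ k' k) = Sminus twoJ k k'
  rw [Splus, Sminus, Matrix.of_apply, Matrix.of_apply]
  by_cases h : (k' : ℕ) = (k : ℕ) + 1
  · rw [if_pos h, if_pos h.symm, Complex.star_def, Complex.conj_ofReal]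
    norm_cast
    congr 1
    have hk' : (k' : ℝ) = (k : ℝ) + 1 := by exact_mod_cast congrArg (Nat.cast (R := ℝ)) h
    simp only [mval, hk']
    ring
  · rw [if_neg h, if_neg fun h' => h h'.symm, star_zero]

lemma Sminus_conjTranspose (twoJ : ℕ) : (Sminus twoJ)ᴴ = Splus twoJ := by
  rw [← Splus_conjTranspose, Matrix.conjTranspose_conjTranspose]

lemma S3_conjTranspose (twoJ : ℕ) : (S3 twoJ)ᴴ = S3 twoJ := by
  ext k k'
  rw [Matrix.conjTranspose_apply, S3, Matrix.diagonal_apply, Matrix.diagonal_apply]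
  by_cases h : k' = k
  · subst h; simp [Complex.star_def, Complex.conj_ofReal]
  · simp [h, Ne.symm h]

lemma S1_conjTranspose (twoJ : ℕ) : (S1 twoJ)ᴴ = S1 twoJ := by
  rw [S1, Matrix.conjTranspose_smul, Matrix.conjTranspose_add, Splus_conjTranspose,
    Sminus_conjTranspose]
  rw [show star (2:ℂ)⁻¹ = (2:ℂ)⁻¹ by simp, add_comm (Sminus twoJ)]

lemma S2_conjTranspose (twoJ : ℕ) : (S2 twoJ)ᴴ = S2 twoJ := by
  rw [S2, Matrix.conjTranspose_smul, Matrix.conjTranspose_sub, Splus_conjTranspose,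
    Sminus_conjTranspose]
  have h2 : star (2 * Complex.I) = -(2 * Complex.I) := by
    rw [star_mul', Complex.star_def, Complex.conj_I]
    simp only [Complex.star_def, map_ofNat]
    ring
  rw [star_inv₀, h2, inv_neg, neg_smul, ← smul_neg, neg_sub]

variable {ι : Type*} [Fintype ι] [DecidableEq ι]

lemma hInt_conjTranspose (twoJ : ℕ) (Δ : ℝ) (α β : ι) (hab : α ≠ β) :
    (hInt twoJ Δ α β)ᴴ = hInt twoJ Δ α β := by
  rw [hInt, Matrix.conjTranspose_add, Matrix.conjTranspose_sub, Matrix.conjTranspose_sub]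
  congr 1
  congr 1
  congr 1
  · rw [Matrix.conjTranspose_smul, Matrix.conjTranspose_one]
    congr 1
    rw [Complex.star_def]
    exact Complex.conj_ofReal _
  · rw [Matrix.conjTranspose_mul, oneSite_conjTranspose, oneSite_conjTranspose,
      S3_conjTranspose, oneSite_comm _ _ _ _ (Ne.symm hab)]
  · rw [Matrix.conjTranspose_smul, Matrix.conjTranspose_add, Matrix.conjTranspose_mul,
      Matrix.conjTranspose_mul, oneSite_conjTranspose, oneSite_conjTranspose,
      oneSite_conjTranspose, oneSite_conjTranspose, S1_conjTranspose, S2_conjTranspose,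
      oneSite_comm _ _ _ _ (Ne.symm hab), oneSite_comm (S2 twoJ) _ _ _ (Ne.symm hab),
      Complex.star_def, Complex.conj_ofReal]
  · rw [Matrix.conjTranspose_smul, Matrix.conjTranspose_sub, oneSite_conjTranspose,
      oneSite_conjTranspose, S3_conjTranspose, Complex.star_def, Complex.conj_ofReal]

lemma Hchain_conjTranspose (twoJ L : ℕ) (Δ : ℝ) :
    (Hchain twoJ L Δ)ᴴ = Hchain twoJ L Δ := by
  rw [Hchain, Matrix.conjTranspose_sum]
  apply Finset.sum_congr rfl
  intro x _
  by_cases h : (x : ℕ) + 1 < L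
  · simp only [dif_pos h]
    refine hInt_conjTranspose _ _ _ _ ?_
    intro hx
    have := congrArg Fin.val hx
    simp at this
  · simp only [dif_neg h, Matrix.conjTranspose_zero]

lemma Hladder_conjTranspose (twoJ L : ℕ) (Δ : ℝ) :
    (Hladder twoJ L Δ)ᴴ = Hladder twoJ L Δ := by
  rw [Hladder, Matrix.conjTranspose_sum]
  apply Finset.sum_congr rfl
  intro x _
  rw [Matrix.conjTranspose_sum]
  apply Finset.sum_congr rfl
  intro j _
  rw [Matrix.conjTranspose_sum]
  apply Finset.sum_congr rfl
  intro k _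
  by_cases h : (x : ℕ) + 1 < L
  · simp only [dif_pos h]
    refine hInt_conjTranspose _ _ _ _ ?_
    intro hx
    have := congrArg (fun p : Fin L × Fin twoJ => (p.1 : ℕ)) hx
    simp at this
  · simp only [dif_neg h, Matrix.conjTranspose_zero]

lemma S3tot_conjTranspose (twoJ : ℕ) :
    (S3tot twoJ (ι := ι))ᴴ = S3tot twoJ := by
  rw [S3tot, Matrix.conjTranspose_sum]
  apply Finset.sum_congr rfl
  intro α _
  rw [oneSite_conjTranspose, S3_conjTranspose]

end Hermitian
section WDef

/-- Number of up-spins in rung `α`. -/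
def cnt {twoJ L : ℕ} (τ : Fin L × Fin twoJ → Fin (1+1)) (α : Fin L) : ℕ :=
  (Finset.univ.filter fun j : Fin twoJ => τ (α, j) = 1).card

/-- Normalization factor for the symmetric (Dicke) states. -/
def wfac {twoJ L : ℕ} (v : Fin L → Fin (twoJ+1)) : ℝ :=
  ∏ α, (Real.sqrt (Nat.choose twoJ (v α)))⁻¹

/-- The isometry from the spin-J chain onto the rung-symmetric subspace of the ladder. -/
def Wmat (twoJ L : ℕ) : Matrix (Fin L × Fin twoJ → Fin (1+1)) (Fin L → Fin (twoJ+1)) ℂ :=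
  Matrix.of fun τ v => if ∀ α, cnt τ α = (v α : ℕ) then ((wfac v : ℝ) : ℂ) else 0

variable {twoJ L : ℕ}

lemma fin2_cases : ∀ s : Fin (1+1), s = 0 ∨ s = 1 := by decide

lemma fin2_eq_zero_iff : ∀ s : Fin (1+1), s = 0 ↔ ¬ s = 1 := by decide

lemma cnt_le (τ : Fin L × Fin twoJ → Fin (1+1)) (α : Fin L) : cnt τ α ≤ twoJ := by
  refine le_trans (Finset.card_filter_le _ _) ?_
  simp

lemma cnt_update_ne (τ : Fin L × Fin twoJ → Fin (1+1)) (α β : Fin L) (j : Fin twoJ)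
    (s : Fin (1+1)) (h : β ≠ α) :
    cnt (Function.update τ (α, j) s) β = cnt τ β := by
  unfold cnt
  congr 1
  apply Finset.filter_congr
  intro j' _
  rw [Function.update_of_ne (fun he => h (congrArg Prod.fst he))]

lemma cnt_update_zero (τ : Fin L × Fin twoJ → Fin (1+1)) (α : Fin L) (j : Fin twoJ)
    (h : τ (α, j) = 1) :
    cnt (Function.update τ (α, j) (0 : Fin (1+1))) α + 1 = cnt τ α := by
  unfold cnt
  have hset : (Finset.univ.filter fun j' : Fin twoJ =>
      Function.update τ (α, j) (0 : Fin (1+1)) (α, j') = 1)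
      = (Finset.univ.filter fun j' : Fin twoJ => τ (α, j') = 1).erase j := by
    ext j'
    simp only [Finset.mem_filter, Finset.mem_univ, true_and, Finset.mem_erase]
    by_cases hj : j' = j
    · subst hj
      rw [Function.update_self]
      simp [Fin.ext_iff]
    · rw [Function.update_of_ne (by simp [Prod.ext_iff, hj])]
      tauto
  rw [hset, Finset.card_erase_of_mem (by simp [h])]
  have hmem : j ∈ Finset.univ.filter fun j' : Fin twoJ => τ (α, j') = 1 := by simp [h]
  have := Finset.card_pos.mpr ⟨j, hmem⟩
  omega

lemma cnt_update_one (τ : Fin L × Fin twoJ → Fin (1+1)) (α : Fin L) (j : Fin twoJ)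
    (h : τ (α, j) = 0) :
    cnt (Function.update τ (α, j) (1 : Fin (1+1))) α = cnt τ α + 1 := by
  unfold cnt
  have hset : (Finset.univ.filter fun j' : Fin twoJ =>
      Function.update τ (α, j) (1 : Fin (1+1)) (α, j') = 1)
      = insert j (Finset.univ.filter fun j' : Fin twoJ => τ (α, j') = 1) := by
    ext j'
    simp only [Finset.mem_filter, Finset.mem_univ, true_and, Finset.mem_insert]
    by_cases hj : j' = j
    · subst hj
      rw [Function.update_self]
      simp
    · rw [Function.update_of_ne (by simp [Prod.ext_iff, hj])]
      tauto
  rw [hset, Finset.card_insert_of_notMem (by simp [h])]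

lemma card_zero_filter (τ : Fin L × Fin twoJ → Fin (1+1)) (α : Fin L) :
    (Finset.univ.filter fun j : Fin twoJ => τ (α, j) = 0).card = twoJ - cnt τ α := by
  have h1 : (Finset.univ.filter fun j : Fin twoJ => τ (α, j) = 0)
      = Finset.univ.filter fun j : Fin twoJ => ¬ τ (α, j) = 1 := by
    apply Finset.filter_congr
    intro j _
    exact fin2_eq_zero_iff _
  rw [h1]
  have := Finset.card_filter_add_card_filter_not
    (s := (Finset.univ : Finset (Fin twoJ))) (p := fun j => τ (α, j) = 1)
  rw [Finset.card_univ, Fintype.card_fin] at this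
  unfold cnt
  omega

lemma wfac_pos (v : Fin L → Fin (twoJ+1)) : 0 < wfac (twoJ := twoJ) v := by
  apply Finset.prod_pos
  intro α _
  rw [inv_pos]
  apply Real.sqrt_pos.mpr
  have hle : ((v α : ℕ)) ≤ twoJ := Nat.lt_succ_iff.mp (v α).isLt
  have : 0 < Nat.choose twoJ (v α) := Nat.choose_pos hle
  exact_mod_cast this

lemma Wmat_star (τ : Fin L × Fin twoJ → Fin (1+1)) (v : Fin L → Fin (twoJ+1)) :
    star (Wmat twoJ L τ v) = Wmat twoJ L τ v := by
  rw [Wmat, Matrix.of_apply]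
  split
  · rw [Complex.star_def, Complex.conj_ofReal]
  · exact star_zero _

end WDef
section Intertwine

variable {twoJ L : ℕ}

lemma val_fin2 : ∀ a : Fin (1+1), ((a : ℕ) : ℝ) = if a = 1 then 1 else 0 := by
  intro a
  fin_cases a <;> simp

lemma sum_val_cnt (τ : Fin L × Fin twoJ → Fin (1+1)) (α : Fin L) :
    ∑ j : Fin twoJ, ((τ (α, j) : ℕ) : ℝ) = (cnt τ α : ℝ) := by
  rw [cnt]
  rw [← Finset.sum_boole]
  apply Finset.sum_congr rfl
  intro j _
  exact val_fin2 _

lemma S3_intertwine (α : Fin L) :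
    (∑ j : Fin twoJ, oneSite (S3 1) ((α, j) : Fin L × Fin twoJ)) * Wmat twoJ L
      = Wmat twoJ L * oneSite (S3 twoJ) α := by
  ext τ v
  rw [Matrix.sum_mul, Matrix.sum_apply]
  have hS3 : ∀ (m : ℕ) (a s : Fin (m+1)), S3 m a s = if a = s then ((mval m a : ℝ) : ℂ) else 0 := by
    intro m a s
    rw [S3, Matrix.diagonal_apply]
  have hLHS : ∀ j : Fin twoJ,
      (oneSite (S3 1) ((α, j) : Fin L × Fin twoJ) * Wmat twoJ L) τ v
        = ((mval 1 (τ (α, j)) : ℝ) : ℂ) * Wmat twoJ L τ v := by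
    intro j
    rw [oneSite_mul_apply]
    simp_rw [hS3, ite_mul, zero_mul]
    rw [Finset.sum_ite_eq Finset.univ (τ (α, j))
      (fun s => ((mval 1 (τ (α,j)) : ℝ) : ℂ) * Wmat twoJ L (Function.update τ (α,j) s) v)]
    rw [if_pos (Finset.mem_univ _), Function.update_eq_self]
  simp_rw [hLHS]
  rw [← Finset.sum_mul]
  rw [mul_oneSite_apply]
  simp_rw [hS3, mul_ite, mul_zero]
  rw [Finset.sum_ite_eq' Finset.univ (v α)
    (fun s => Wmat twoJ L τ (Function.update v α s) * ((mval twoJ s : ℝ) : ℂ))]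
  rw [if_pos (Finset.mem_univ _), Function.update_eq_self]
  rw [Wmat, Matrix.of_apply]
  split
  next h =>
    rw [mul_comm]
    congr 1
    rw [← Complex.ofReal_sum]
    norm_cast
    unfold mval
    rw [Finset.sum_sub_distrib, sum_val_cnt, h α]
    rw [Finset.sum_const, Finset.card_univ, Fintype.card_fin]
    push_cast
    ring
  next h =>
    rw [mul_zero, zero_mul]

lemma choose_cast_identity (n k : ℕ) (hk : k + 1 ≤ n) :
    ((Nat.choose n (k+1) : ℝ)) * ((k:ℝ) + 1) = (Nat.choose n k : ℝ) * ((n:ℝ) - k) := by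
  have := Nat.choose_succ_right_eq n k
  have hcast : ((Nat.choose n (k+1) * (k+1) : ℕ) : ℝ) = ((Nat.choose n k * (n - k) : ℕ) : ℝ) := by
    exact_mod_cast congrArg (Nat.cast (R := ℝ)) this
  push_cast [Nat.cast_sub (by omega : k ≤ n)] at hcast
  linarith [hcast]

lemma sqrt_ratio (n k : ℕ) (hk : k + 1 ≤ n) :
    ((k:ℝ) + 1) * (Real.sqrt (Nat.choose n k))⁻¹
      = (Real.sqrt (Nat.choose n (k+1)))⁻¹ * Real.sqrt (((n:ℝ) - k) * ((k:ℝ) + 1)) := by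
  have ha : (0:ℝ) < (Nat.choose n k : ℝ) := by
    exact_mod_cast Nat.choose_pos (by omega : k ≤ n)
  have hb : (0:ℝ) < (Nat.choose n (k+1) : ℝ) := by
    exact_mod_cast Nat.choose_pos hk
  have key := choose_cast_identity n k hk
  have e1 : ((k:ℝ) + 1) * (Real.sqrt (Nat.choose n k))⁻¹
      = Real.sqrt (((k:ℝ)+1)^2 * (Nat.choose n k : ℝ)⁻¹) := by
    rw [Real.sqrt_mul (by positivity), Real.sqrt_sq (by positivity), Real.sqrt_inv]
  have e2 : Real.sqrt ((Nat.choose n (k+1) : ℝ)⁻¹ * (((n:ℝ) - k) * ((k:ℝ)+1)))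
      = (Real.sqrt (Nat.choose n (k+1)))⁻¹ * Real.sqrt (((n:ℝ) - k) * ((k:ℝ) + 1)) := by
    rw [Real.sqrt_mul (by positivity : (0:ℝ) ≤ (Nat.choose n (k+1) : ℝ)⁻¹), Real.sqrt_inv]
  rw [e1, ← e2]
  congr 1
  field_simp
  nlinarith [key]

lemma sqrt_ratio' (n k : ℕ) (hk : k + 1 ≤ n) :
    ((n:ℝ) - k) * (Real.sqrt (Nat.choose n (k+1)))⁻¹
      = (Real.sqrt (Nat.choose n k))⁻¹ * Real.sqrt (((n:ℝ) - k) * ((k:ℝ) + 1)) := by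
  have ha : (0:ℝ) < (Nat.choose n k : ℝ) := by
    exact_mod_cast Nat.choose_pos (by omega : k ≤ n)
  have hb : (0:ℝ) < (Nat.choose n (k+1) : ℝ) := by
    exact_mod_cast Nat.choose_pos hk
  have hnk : (0:ℝ) ≤ (n:ℝ) - k := by
    have : (k:ℝ) + 1 ≤ (n:ℝ) := by exact_mod_cast hk
    linarith
  have key := choose_cast_identity n k hk
  have e1 : ((n:ℝ) - k) * (Real.sqrt (Nat.choose n (k+1)))⁻¹
      = Real.sqrt (((n:ℝ)-k)^2 * (Nat.choose n (k+1) : ℝ)⁻¹) := by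
    rw [Real.sqrt_mul (by positivity), Real.sqrt_sq hnk, Real.sqrt_inv]
  have e2 : Real.sqrt ((Nat.choose n k : ℝ)⁻¹ * (((n:ℝ) - k) * ((k:ℝ)+1)))
      = (Real.sqrt (Nat.choose n k))⁻¹ * Real.sqrt (((n:ℝ) - k) * ((k:ℝ) + 1)) := by
    rw [Real.sqrt_mul (by positivity : (0:ℝ) ≤ (Nat.choose n k : ℝ)⁻¹), Real.sqrt_inv]
  rw [e1, ← e2]
  congr 1
  field_simp
  nlinarith [key]

lemma wfac_erase (v : Fin L → Fin (twoJ+1)) (α : Fin L) :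
    wfac (twoJ := twoJ) v = (Real.sqrt (Nat.choose twoJ (v α)))⁻¹ *
      ∏ β ∈ Finset.univ.erase α, (Real.sqrt (Nat.choose twoJ (v β)))⁻¹ :=
  (Finset.mul_prod_erase Finset.univ _ (Finset.mem_univ α)).symm

lemma wfac_update (v : Fin L → Fin (twoJ+1)) (α : Fin L) (s : Fin (twoJ+1)) :
    wfac (Function.update v α s) = (Real.sqrt (Nat.choose twoJ s))⁻¹ *
      ∏ β ∈ Finset.univ.erase α, (Real.sqrt (Nat.choose twoJ (v β)))⁻¹ := by
  rw [wfac, ← Finset.mul_prod_erase Finset.univ _ (Finset.mem_univ α), Function.update_self]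
  congr 1
  apply Finset.prod_congr rfl
  intro β hβ
  rw [Function.update_of_ne (Finset.ne_of_mem_erase hβ)]

end Intertwine
section SplusIntertwine

variable {twoJ L : ℕ}

lemma Splus_one_apply : ∀ a b : Fin (1+1),
    Splus 1 a b = if a = 1 ∧ b = 0 then 1 else 0 := by
  intro a b
  fin_cases a <;> fin_cases b <;>
    simp only [Splus, Matrix.of_apply, mval] <;> norm_num

/-- The auxiliary condition: every rung count matches `v` except at `α`,
where the count is `v α + 1`. -/
def Cplus (τ : Fin L × Fin twoJ → Fin (1+1)) (v : Fin L → Fin (twoJ+1)) (α : Fin L) : Prop :=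
  (∀ β, β ≠ α → cnt τ β = (v β : ℕ)) ∧ cnt τ α = (v α : ℕ) + 1

lemma Splus_intertwine (α : Fin L) :
    (∑ j : Fin twoJ, oneSite (Splus 1) ((α, j) : Fin L × Fin twoJ)) * Wmat twoJ L
      = Wmat twoJ L * oneSite (Splus twoJ) α := by
  ext τ v
  rw [Matrix.sum_mul, Matrix.sum_apply]
  -- LHS
  have hLHS : ∀ j : Fin twoJ,
      (oneSite (Splus 1) ((α, j) : Fin L × Fin twoJ) * Wmat twoJ L) τ v
        = (if τ (α, j) = 1 then (1:ℂ) else 0) *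
          (if Cplus τ v α then ((wfac v : ℝ) : ℂ) else 0) := by
    intro j
    rw [oneSite_mul_apply]
    simp_rw [Splus_one_apply]
    rw [Fin.sum_univ_two]
    simp only [Fin.isValue, and_true, and_false, if_false, zero_mul, add_zero,
      show ((0:Fin (1+1)) = 0) = True by simp, show ((1:Fin (1+1)) = 0) = False by simp [Fin.ext_iff],
      if_true]
    by_cases hj : τ (α, j) = 1
    · rw [if_pos hj, one_mul, one_mul, Wmat, Matrix.of_apply]
      congr 1
      simp only [eq_iff_iff]
      constructor
      · intro h
        refine ⟨fun β hβ => ?_, ?_⟩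
        · rw [← h β, cnt_update_ne _ _ _ _ _ hβ]
        · have h1 := cnt_update_zero τ α j hj
          have h2 := h α
          omega
      · rintro ⟨h1, h2⟩ β
        by_cases hβ : β = α
        · subst hβ
          have := cnt_update_zero τ β j hj
          omega
        · rw [cnt_update_ne _ _ _ _ _ hβ, h1 β hβ]
    · rw [if_neg hj, zero_mul, zero_mul]
  simp_rw [hLHS]
  rw [← Finset.sum_mul, Finset.sum_boole]
  have hcard : (Finset.univ.filter fun j : Fin twoJ => τ (α, j) = 1).card = cnt τ α := rfl
  rw [hcard]
  -- RHS
  rw [mul_oneSite_apply]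
  rcases Nat.lt_or_ge (v α : ℕ) twoJ with hv | hv
  · -- the raised index exists
    set s₀ : Fin (twoJ+1) := ⟨(v α : ℕ) + 1, by omega⟩ with hs₀
    rw [Finset.sum_eq_single s₀]
    rotate_left
    · intro s _ hs
      rw [Splus, Matrix.of_apply, if_neg, mul_zero]
      intro hcond
      exact hs (Fin.ext hcond)
    · intro habs
      exact absurd (Finset.mem_univ s₀) habs
    rw [Splus, Matrix.of_apply, if_pos rfl]
    rw [Wmat, Matrix.of_apply]
    have hcond : (∀ β, cnt τ β = ((Function.update v α s₀ : Fin L → Fin (twoJ+1)) β : ℕ))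
        ↔ Cplus τ v α := by
      constructor
      · intro h
        refine ⟨fun β hβ => ?_, ?_⟩
        · have := h β
          rw [Function.update_of_ne hβ] at this
          exact this
        · have := h α
          rw [Function.update_self] at this
          exact this
      · rintro ⟨h1, h2⟩ β
        by_cases hβ : β = α
        · subst hβ
          rw [Function.update_self]
          exact h2
        · rw [Function.update_of_ne hβ]
          exact h1 β hβ
    by_cases hC : Cplus τ v α
    · rw [if_pos (hcond.mpr hC), if_pos hC]
      have hcnt : cnt τ α = (v α : ℕ) + 1 := hC.2
      rw [hcnt]
      -- now a real computation
      have hsqrt : Real.sqrt ((twoJ:ℝ)/2 * ((twoJ:ℝ)/2 + 1) - mval twoJ (v α) * (mval twoJ (v α) + 1))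
          = Real.sqrt (((twoJ:ℝ) - (v α : ℕ)) * (((v α : ℕ):ℝ) + 1)) := by
        congr 1
        unfold mval
        ring
      rw [hsqrt]
      rw [wfac_update v α s₀, wfac_erase v α]
      rw [← Complex.ofReal_natCast ((v α : ℕ) + 1), ← Complex.ofReal_mul, ← Complex.ofReal_mul,
        Complex.ofReal_inj]
      push_cast
      calc (((v α : ℕ):ℝ) + 1) * ((Real.sqrt (Nat.choose twoJ (v α)))⁻¹ *
              ∏ β ∈ Finset.univ.erase α, (Real.sqrt (Nat.choose twoJ (v β)))⁻¹)
          = ((((v α : ℕ):ℝ) + 1) * (Real.sqrt (Nat.choose twoJ (v α)))⁻¹) *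
              ∏ β ∈ Finset.univ.erase α, (Real.sqrt (Nat.choose twoJ (v β)))⁻¹ := by ring
        _ = ((Real.sqrt (Nat.choose twoJ ((v α : ℕ)+1)))⁻¹ *
              Real.sqrt (((twoJ:ℝ) - (v α:ℕ)) * (((v α:ℕ):ℝ) + 1))) *
              ∏ β ∈ Finset.univ.erase α, (Real.sqrt (Nat.choose twoJ (v β)))⁻¹ := by
            rw [sqrt_ratio twoJ (v α : ℕ) (by omega)]
        _ = ((Real.sqrt (Nat.choose twoJ ((v α : ℕ) + 1)))⁻¹ *
              ∏ β ∈ Finset.univ.erase α, (Real.sqrt (Nat.choose twoJ (v β)))⁻¹) *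
              Real.sqrt (((twoJ:ℝ) - (v α:ℕ)) * (((v α:ℕ):ℝ) + 1)) := by
            ring
    · rw [if_neg (fun h => hC (hcond.mp h)), if_neg hC]
      simp
  · -- v α is maximal: both sides vanish
    have hLHS0 : ¬ Cplus τ v α := by
      rintro ⟨-, h2⟩
      have := cnt_le τ α
      omega
    rw [if_neg hLHS0, mul_zero]
    symm
    apply Finset.sum_eq_zero
    intro s _
    rw [Splus, Matrix.of_apply, if_neg, mul_zero]
    intro hcond
    have := s.isLt
    omega

end SplusIntertwine
section SminusIntertwine

variable {twoJ L : ℕ}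

lemma Sminus_one_apply : ∀ a b : Fin (1+1),
    Sminus 1 a b = if a = 0 ∧ b = 1 then 1 else 0 := by
  intro a b
  fin_cases a <;> fin_cases b <;>
    simp only [Sminus, Matrix.of_apply, mval] <;> norm_num

def Cminus (τ : Fin L × Fin twoJ → Fin (1+1)) (v : Fin L → Fin (twoJ+1)) (α : Fin L) : Prop :=
  (∀ β, β ≠ α → cnt τ β = (v β : ℕ)) ∧ cnt τ α + 1 = (v α : ℕ)

lemma Sminus_intertwine (α : Fin L) :
    (∑ j : Fin twoJ, oneSite (Sminus 1) ((α, j) : Fin L × Fin twoJ)) * Wmat twoJ L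
      = Wmat twoJ L * oneSite (Sminus twoJ) α := by
  ext τ v
  rw [Matrix.sum_mul, Matrix.sum_apply]
  have hLHS : ∀ j : Fin twoJ,
      (oneSite (Sminus 1) ((α, j) : Fin L × Fin twoJ) * Wmat twoJ L) τ v
        = (if τ (α, j) = 0 then (1:ℂ) else 0) *
          (if Cminus τ v α then ((wfac v : ℝ) : ℂ) else 0) := by
    intro j
    rw [oneSite_mul_apply]
    simp_rw [Sminus_one_apply]
    rw [Fin.sum_univ_two]
    simp only [Fin.isValue, and_false, and_true, if_false, zero_mul, zero_add,
      show ((1:Fin (1+1)) = 1) = True by simp, show ((0:Fin (1+1)) = 1) = False by simp [Fin.ext_iff],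
      if_true]
    by_cases hj : τ (α, j) = 0
    · rw [if_pos hj, one_mul, one_mul, Wmat, Matrix.of_apply]
      congr 1
      simp only [eq_iff_iff]
      constructor
      · intro h
        refine ⟨fun β hβ => ?_, ?_⟩
        · rw [← h β, cnt_update_ne _ _ _ _ _ hβ]
        · have h1 := cnt_update_one τ α j hj
          have h2 := h α
          omega
      · rintro ⟨h1, h2⟩ β
        by_cases hβ : β = α
        · subst hβ
          have := cnt_update_one τ β j hj
          omega
        · rw [cnt_update_ne _ _ _ _ _ hβ, h1 β hβ]
    · rw [if_neg hj, zero_mul, zero_mul]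
  simp_rw [hLHS]
  rw [← Finset.sum_mul, Finset.sum_boole, card_zero_filter]
  rw [mul_oneSite_apply]
  rcases Nat.lt_or_ge 0 (v α : ℕ) with hv | hv
  · set k : ℕ := (v α : ℕ) - 1 with hkdef
    have hk : (v α : ℕ) = k + 1 := by omega
    have hkle : k + 1 ≤ twoJ := by
      have := Nat.lt_succ_iff.mp (v α).isLt
      omega
    set s₀ : Fin (twoJ+1) := ⟨k, by omega⟩ with hs₀
    rw [Finset.sum_eq_single s₀]
    rotate_left
    · intro s _ hs
      rw [Sminus, Matrix.of_apply, if_neg, mul_zero]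
      intro hcond
      apply hs
      apply Fin.ext
      show (s : ℕ) = k
      omega
    · intro habs
      exact absurd (Finset.mem_univ s₀) habs
    have hifc : ((s₀ : Fin (twoJ+1)) : ℕ) + 1 = (v α : ℕ) := by
      show k + 1 = (v α : ℕ)
      omega
    rw [Sminus, Matrix.of_apply, if_pos hifc]
    rw [Wmat, Matrix.of_apply]
    have hcond : (∀ β, cnt τ β = ((Function.update v α s₀ : Fin L → Fin (twoJ+1)) β : ℕ))
        ↔ Cminus τ v α := by
      constructor
      · intro h
        refine ⟨fun β hβ => ?_, ?_⟩
        · have := h β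
          rw [Function.update_of_ne hβ] at this
          exact this
        · have := h α
          rw [Function.update_self] at this
          show cnt τ α + 1 = (v α : ℕ)
          have hs : ((s₀ : Fin (twoJ+1)) : ℕ) = k := rfl
          omega
      · rintro ⟨h1, h2⟩ β
        by_cases hβ : β = α
        · subst hβ
          rw [Function.update_self]
          show cnt τ β = k
          omega
        · rw [Function.update_of_ne hβ]
          exact h1 β hβ
    by_cases hC : Cminus τ v α
    · rw [if_pos (hcond.mpr hC), if_pos hC]
      have hcnt : cnt τ α = k := by
        have := hC.2
        omega
      rw [hcnt]
      have hsqrt : Real.sqrt ((twoJ:ℝ)/2 * ((twoJ:ℝ)/2 + 1) - mval twoJ (v α) * (mval twoJ (v α) - 1))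
          = Real.sqrt (((twoJ:ℝ) - (k:ℝ)) * ((k:ℝ) + 1)) := by
        congr 1
        unfold mval
        have : ((v α : ℕ) : ℝ) = (k:ℝ) + 1 := by exact_mod_cast hk
        rw [this]
        ring
      rw [hsqrt]
      rw [wfac_update v α s₀, wfac_erase v α]
      have hval : ((twoJ - k : ℕ) : ℂ) = Complex.ofReal ((twoJ:ℝ) - (k:ℝ)) := by
        rw [← Complex.ofReal_natCast]
        congr 1
        push_cast [Nat.cast_sub (by omega : k ≤ twoJ)]
        ring
      rw [hval, ← Complex.ofReal_mul, ← Complex.ofReal_mul, Complex.ofReal_inj]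
      have hchoose : (Nat.choose twoJ (v α : ℕ)) = Nat.choose twoJ (k+1) := by rw [hk]
      have hs₀c : (Nat.choose twoJ (s₀ : ℕ)) = Nat.choose twoJ k := rfl
      rw [hchoose, hs₀c]
      calc ((twoJ:ℝ) - (k:ℝ)) * ((Real.sqrt (Nat.choose twoJ (k+1)))⁻¹ *
              ∏ β ∈ Finset.univ.erase α, (Real.sqrt (Nat.choose twoJ (v β)))⁻¹)
          = (((twoJ:ℝ) - (k:ℝ)) * (Real.sqrt (Nat.choose twoJ (k+1)))⁻¹) *
              ∏ β ∈ Finset.univ.erase α, (Real.sqrt (Nat.choose twoJ (v β)))⁻¹ := by ring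
        _ = ((Real.sqrt (Nat.choose twoJ k))⁻¹ *
              Real.sqrt (((twoJ:ℝ) - (k:ℝ)) * ((k:ℝ) + 1))) *
              ∏ β ∈ Finset.univ.erase α, (Real.sqrt (Nat.choose twoJ (v β)))⁻¹ := by
            rw [sqrt_ratio' twoJ k hkle]
        _ = ((Real.sqrt (Nat.choose twoJ k))⁻¹ *
              ∏ β ∈ Finset.univ.erase α, (Real.sqrt (Nat.choose twoJ (v β)))⁻¹) *
              Real.sqrt (((twoJ:ℝ) - (k:ℝ)) * ((k:ℝ) + 1)) := by ring
    · rw [if_neg (fun h => hC (hcond.mp h)), if_neg hC]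
      simp
  · have hC0 : ¬ Cminus τ v α := by
      rintro ⟨-, h2⟩
      omega
    rw [if_neg hC0, mul_zero]
    symm
    apply Finset.sum_eq_zero
    intro s _
    rw [Sminus, Matrix.of_apply, if_neg, mul_zero]
    intro hcond
    omega

end SminusIntertwine
section Assembly

variable {twoJ L : ℕ}

lemma S1_intertwine (α : Fin L) :
    (∑ j : Fin twoJ, oneSite (S1 1) ((α, j) : Fin L × Fin twoJ)) * Wmat twoJ L
      = Wmat twoJ L * oneSite (S1 twoJ) α := by
  have h : ∀ (m : ℕ) {ι : Type} [Fintype ι] [DecidableEq ι] (p : ι),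
      oneSite (S1 m) p = (2:ℂ)⁻¹ • (oneSite (Splus m) p + oneSite (Sminus m) p) := by
    intro m ι _ _ p
    rw [S1, oneSite_smul, oneSite_add]
  simp_rw [h]
  rw [← Finset.smul_sum, Finset.sum_add_distrib, Matrix.smul_mul, Matrix.add_mul,
    Splus_intertwine, Sminus_intertwine, ← Matrix.mul_add, ← Matrix.mul_smul]

lemma S2_intertwine (α : Fin L) :
    (∑ j : Fin twoJ, oneSite (S2 1) ((α, j) : Fin L × Fin twoJ)) * Wmat twoJ L
      = Wmat twoJ L * oneSite (S2 twoJ) α := by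
  have h : ∀ (m : ℕ) {ι : Type} [Fintype ι] [DecidableEq ι] (p : ι),
      oneSite (S2 m) p = (2 * Complex.I)⁻¹ • (oneSite (Splus m) p - oneSite (Sminus m) p) := by
    intro m ι _ _ p
    rw [S2, oneSite_smul, oneSite_sub]
  simp_rw [h]
  rw [← Finset.smul_sum, Finset.sum_sub_distrib, Matrix.smul_mul, Matrix.sub_mul,
    Splus_intertwine, Sminus_intertwine, ← Matrix.mul_sub, ← Matrix.mul_smul]

lemma sum_hInt_eq (Δ : ℝ) (x y : Fin L) :
    ∑ j : Fin twoJ, ∑ k : Fin twoJ, hInt 1 Δ ((x, j) : Fin L × Fin twoJ) (y, k)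
      = ((((twoJ:ℝ)/2)^2 : ℝ) : ℂ) • (1 : Matrix (Fin L × Fin twoJ → Fin (1+1)) _ ℂ)
        - (∑ j : Fin twoJ, oneSite (S3 1) ((x, j) : Fin L × Fin twoJ))
            * (∑ k : Fin twoJ, oneSite (S3 1) ((y, k) : Fin L × Fin twoJ))
        - ((Δ⁻¹ : ℝ) : ℂ) •
            ((∑ j : Fin twoJ, oneSite (S1 1) ((x, j) : Fin L × Fin twoJ))
              * (∑ k : Fin twoJ, oneSite (S1 1) ((y, k) : Fin L × Fin twoJ))
            + (∑ j : Fin twoJ, oneSite (S2 1) ((x, j) : Fin L × Fin twoJ))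
              * (∑ k : Fin twoJ, oneSite (S2 1) ((y, k) : Fin L × Fin twoJ)))
        + (((twoJ:ℝ)/2 * Real.sqrt (1 - Δ⁻¹ ^ 2) : ℝ) : ℂ) •
            ((∑ j : Fin twoJ, oneSite (S3 1) ((x, j) : Fin L × Fin twoJ))
              - (∑ k : Fin twoJ, oneSite (S3 1) ((y, k) : Fin L × Fin twoJ))) := by
  unfold hInt
  rw [Finset.sum_mul_sum, Finset.sum_mul_sum, Finset.sum_mul_sum]
  simp_rw [Finset.sum_add_distrib, Finset.sum_sub_distrib, ← Finset.smul_sum,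
    Finset.sum_const, Finset.card_univ, Fintype.card_fin]
  congr 1
  congr 1
  congr 1
  · -- constant term
    rw [← Nat.cast_smul_eq_nsmul ℂ twoJ (1 : Matrix (Fin L × Fin twoJ → Fin (1+1)) _ ℂ),
      ← Nat.cast_smul_eq_nsmul ℂ twoJ, smul_smul, smul_smul]
    congr 1
    push_cast
    ring
  · -- S1 S2 term
    congr 1
    simp_rw [Finset.sum_add_distrib]
  · -- boundary term
    simp_rw [Finset.sum_sub_distrib, Finset.sum_const, Finset.card_univ, Fintype.card_fin,
      ← Finset.smul_sum]
    rw [← smul_sub, ← Nat.cast_smul_eq_nsmul ℂ twoJ, smul_smul]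
    congr 1
    push_cast
    ring

lemma hsum_W (Δ : ℝ) (x y : Fin L) :
    (∑ j : Fin twoJ, ∑ k : Fin twoJ, hInt 1 Δ ((x, j) : Fin L × Fin twoJ) (y, k))
        * Wmat twoJ L
      = Wmat twoJ L * hInt twoJ Δ x y := by
  rw [sum_hInt_eq]
  rw [hInt]
  rw [Matrix.add_mul, Matrix.sub_mul, Matrix.sub_mul, Matrix.smul_mul, Matrix.one_mul,
    Matrix.smul_mul, Matrix.add_mul, Matrix.smul_mul, Matrix.sub_mul]
  rw [Matrix.mul_assoc (∑ j : Fin twoJ, oneSite (S3 1) ((x, j) : Fin L × Fin twoJ))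
      (∑ k : Fin twoJ, oneSite (S3 1) ((y, k) : Fin L × Fin twoJ)) (Wmat twoJ L),
    S3_intertwine y,
    ← Matrix.mul_assoc (∑ j : Fin twoJ, oneSite (S3 1) ((x, j) : Fin L × Fin twoJ))
      (Wmat twoJ L) (oneSite (S3 twoJ) y),
    S3_intertwine x,
    Matrix.mul_assoc (Wmat twoJ L) (oneSite (S3 twoJ) x) (oneSite (S3 twoJ) y)]
  rw [Matrix.mul_assoc (∑ j : Fin twoJ, oneSite (S1 1) ((x, j) : Fin L × Fin twoJ))
      (∑ k : Fin twoJ, oneSite (S1 1) ((y, k) : Fin L × Fin twoJ)) (Wmat twoJ L),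
    S1_intertwine y,
    ← Matrix.mul_assoc (∑ j : Fin twoJ, oneSite (S1 1) ((x, j) : Fin L × Fin twoJ))
      (Wmat twoJ L) (oneSite (S1 twoJ) y),
    S1_intertwine x,
    Matrix.mul_assoc (Wmat twoJ L) (oneSite (S1 twoJ) x) (oneSite (S1 twoJ) y)]
  rw [Matrix.mul_assoc (∑ j : Fin twoJ, oneSite (S2 1) ((x, j) : Fin L × Fin twoJ))
      (∑ k : Fin twoJ, oneSite (S2 1) ((y, k) : Fin L × Fin twoJ)) (Wmat twoJ L),
    S2_intertwine y,
    ← Matrix.mul_assoc (∑ j : Fin twoJ, oneSite (S2 1) ((x, j) : Fin L × Fin twoJ))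
      (Wmat twoJ L) (oneSite (S2 twoJ) y),
    S2_intertwine x,
    Matrix.mul_assoc (Wmat twoJ L) (oneSite (S2 twoJ) x) (oneSite (S2 twoJ) y)]
  rw [Matrix.mul_add, Matrix.mul_sub, Matrix.mul_sub, Matrix.mul_smul, Matrix.mul_one,
    Matrix.mul_smul, Matrix.mul_add, Matrix.mul_smul, Matrix.mul_sub]

lemma Hladder_W (Δ : ℝ) :
    Hladder twoJ L Δ * Wmat twoJ L = Wmat twoJ L * Hchain twoJ L Δ := by
  rw [Hladder, Hchain, Matrix.sum_mul, Matrix.mul_sum]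
  apply Finset.sum_congr rfl
  intro x _
  by_cases h : (x : ℕ) + 1 < L
  · simp only [dif_pos h]
    exact hsum_W Δ x _
  · simp only [dif_neg h]
    simp

lemma S3tot_W :
    S3tot 1 (ι := Fin L × Fin twoJ) * Wmat twoJ L = Wmat twoJ L * S3tot twoJ (ι := Fin L) := by
  rw [S3tot, S3tot]
  rw [show (∑ p : Fin L × Fin twoJ, oneSite (S3 1) p)
      = ∑ x : Fin L, ∑ j : Fin twoJ, oneSite (S3 1) ((x, j) : Fin L × Fin twoJ) from
    Fintype.sum_prod_type _]
  rw [Matrix.sum_mul, Matrix.mul_sum]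
  apply Finset.sum_congr rfl
  intro x _
  exact S3_intertwine x

lemma W_Hladder (Δ : ℝ) :
    (Wmat twoJ L)ᴴ * Hladder twoJ L Δ = Hchain twoJ L Δ * (Wmat twoJ L)ᴴ := by
  have h := congrArg Matrix.conjTranspose (Hladder_W (twoJ := twoJ) (L := L) Δ)
  rw [Matrix.conjTranspose_mul, Matrix.conjTranspose_mul, Hladder_conjTranspose,
    Hchain_conjTranspose] at h
  exact h

lemma W_S3tot :
    (Wmat twoJ L)ᴴ * S3tot 1 (ι := Fin L × Fin twoJ) = S3tot twoJ (ι := Fin L) * (Wmat twoJ L)ᴴ := by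
  have h := congrArg Matrix.conjTranspose (S3tot_W (twoJ := twoJ) (L := L))
  rw [Matrix.conjTranspose_mul, Matrix.conjTranspose_mul, S3tot_conjTranspose,
    S3tot_conjTranspose] at h
  exact h

end Assembly
section Isometry

variable {twoJ L : ℕ}

lemma card_fun_cnt (n k : ℕ) :
    (Finset.univ.filter fun f : Fin n → Fin (1+1) =>
      (Finset.univ.filter fun j => f j = 1).card = k).card = Nat.choose n k := by
  rw [show Nat.choose n k = ((Finset.univ : Finset (Fin n)).powersetCard k).card by
    rw [Finset.card_powersetCard, Finset.card_univ, Fintype.card_fin]]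
  apply Finset.card_nbij' (i := fun f => Finset.univ.filter fun j => f j = 1)
    (j := fun s => fun x => if x ∈ s then 1 else 0)
  · intro f hf
    rw [Finset.mem_coe, Finset.mem_filter] at hf
    rw [Finset.mem_coe, Finset.mem_powersetCard]
    exact ⟨Finset.subset_univ _, hf.2⟩
  · intro s hs
    rw [Finset.mem_coe, Finset.mem_powersetCard] at hs
    rw [Finset.mem_coe, Finset.mem_filter]
    refine ⟨Finset.mem_univ _, ?_⟩
    rw [show (Finset.univ.filter fun j => (if j ∈ s then (1 : Fin (1+1)) else 0) = 1) = s by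
      ext x
      by_cases hx : x ∈ s <;> simp [hx, Fin.ext_iff]]
    exact hs.2
  · intro f hf
    funext x
    by_cases hx : f x = 1
    · simp [hx]
    · have : f x = 0 := (fin2_eq_zero_iff _).mpr hx
      simp [hx, this]
  · intro s hs
    ext x
    by_cases hx : x ∈ s <;> simp [hx, Fin.ext_iff]

lemma card_tau_cnt (v : Fin L → Fin (twoJ+1)) :
    (Finset.univ.filter fun τ : Fin L × Fin twoJ → Fin (1+1) =>
      ∀ α, cnt τ α = (v α : ℕ)).card = ∏ α, Nat.choose twoJ (v α : ℕ) := by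
  have e : {τ : Fin L × Fin twoJ → Fin (1+1) // ∀ α, cnt τ α = (v α : ℕ)}
      ≃ ∀ α : Fin L, {f : Fin twoJ → Fin (1+1) //
          (Finset.univ.filter fun j => f j = 1).card = (v α : ℕ)} :=
    (Equiv.subtypeEquiv (Equiv.curry (Fin L) (Fin twoJ) (Fin (1+1)))
      (fun τ => Iff.rfl)).trans (Equiv.subtypePiEquivPi
        (p := fun (α : Fin L) (f : Fin twoJ → Fin (1+1)) =>
          (Finset.univ.filter fun j => f j = 1).card = (v α : ℕ)))
  rw [← Fintype.card_subtype, Fintype.card_congr e, Fintype.card_pi]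
  apply Finset.prod_congr rfl
  intro α _
  rw [Fintype.card_subtype, card_fun_cnt]

lemma wfac_sq (v : Fin L → Fin (twoJ+1)) :
    wfac (twoJ := twoJ) v * wfac v = ((∏ α, (Nat.choose twoJ (v α : ℕ) : ℝ)))⁻¹ := by
  rw [wfac, ← Finset.prod_mul_distrib, ← Finset.prod_inv_distrib]
  apply Finset.prod_congr rfl
  intro α _
  rw [← mul_inv]
  congr 1
  exact Real.mul_self_sqrt (by positivity)

lemma WdagW : (Wmat twoJ L)ᴴ * Wmat twoJ L = 1 := by
  ext v w
  rw [Matrix.mul_apply]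
  simp_rw [Matrix.conjTranspose_apply, Wmat_star]
  by_cases hvw : v = w
  · subst hvw
    rw [Matrix.one_apply_eq]
    have hterm : ∀ τ : Fin L × Fin twoJ → Fin (1+1),
        Wmat twoJ L τ v * Wmat twoJ L τ v
          = if (∀ α, cnt τ α = (v α : ℕ)) then ((wfac v * wfac v : ℝ) : ℂ) else 0 := by
      intro τ
      rw [Wmat, Matrix.of_apply]
      split <;> simp [Complex.ofReal_mul]
    simp_rw [hterm]
    rw [← Finset.sum_filter, Finset.sum_const, card_tau_cnt, wfac_sq]
    rw [nsmul_eq_mul]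
    rw [show ((∏ α, Nat.choose twoJ (v α : ℕ) : ℕ) : ℂ)
        = (((∏ α, (Nat.choose twoJ (v α : ℕ) : ℝ)) : ℝ) : ℂ) by push_cast; ring]
    rw [← Complex.ofReal_mul]
    rw [mul_inv_cancel₀]
    · exact Complex.ofReal_one
    · apply Finset.prod_ne_zero_iff.mpr
      intro α _
      have : 0 < Nat.choose twoJ (v α : ℕ) :=
        Nat.choose_pos (Nat.lt_succ_iff.mp (v α).isLt)
      positivity
  · rw [Matrix.one_apply_ne hvw]
    apply Finset.sum_eq_zero
    intro τ _
    rw [Wmat, Matrix.of_apply, Matrix.of_apply]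
    by_cases h1 : ∀ α, cnt τ α = (v α : ℕ)
    · rw [if_pos h1]
      rw [if_neg, mul_zero]
      intro h2
      apply hvw
      funext α
      apply Fin.ext
      rw [← h1 α, ← h2 α]
    · rw [if_neg h1, zero_mul]

end Isometry
section PermCount

lemma card_perm_map (n : ℕ) (f g : Fin n → Fin (1+1)) :
    (Finset.univ.filter fun ρ : Equiv.Perm (Fin n) => ∀ j, g j = f (ρ j)).card
      = if (Finset.univ.filter fun j => f j = 1).card
            = (Finset.univ.filter fun j => g j = 1).card
        then ((Finset.univ.filter fun j => g j = 1).card.factorial *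
             (n - (Finset.univ.filter fun j => g j = 1).card).factorial)
        else 0 := by
  classical
  set kf := (Finset.univ.filter fun j => f j = 1).card with hkf
  set kg := (Finset.univ.filter fun j => g j = 1).card with hkg
  by_cases heq : kf = kg
  · rw [if_pos heq]
    -- build the equivalence
    have E : {ρ : Equiv.Perm (Fin n) // ∀ j, g j = f (ρ j)}
        ≃ ({j : Fin n // g j = 1} ≃ {i : Fin n // f i = 1}) ×
          ({j : Fin n // ¬ g j = 1} ≃ {i : Fin n // ¬ f i = 1}) := by
      refine ⟨fun ρh => (Equiv.subtypeEquiv ρh.1 fun j => by rw [ρh.2 j],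
              Equiv.subtypeEquiv ρh.1 fun j => by rw [ρh.2 j]),
        fun e => ⟨(Equiv.sumCompl (fun j => g j = 1)).symm.trans
          (((e.1.sumCongr e.2)).trans (Equiv.sumCompl (fun i => f i = 1))), ?_⟩, ?_, ?_⟩
      · intro j
        by_cases hj : g j = 1
        · have : (Equiv.sumCompl (fun j => g j = 1)).symm j = Sum.inl ⟨j, hj⟩ :=
            Equiv.sumCompl_symm_apply_of_pos (p := fun j => g j = 1) hj
          simp only [Equiv.trans_apply, this, Equiv.sumCongr_apply, Sum.map_inl,
            Equiv.sumCompl_apply_inl]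
          rw [hj, (e.1 ⟨j, hj⟩).2]
        · have : (Equiv.sumCompl (fun j => g j = 1)).symm j = Sum.inr ⟨j, hj⟩ :=
            Equiv.sumCompl_symm_apply_of_neg (p := fun j => g j = 1) hj
          simp only [Equiv.trans_apply, this, Equiv.sumCongr_apply, Sum.map_inr,
            Equiv.sumCompl_apply_inr]
          have h1 : g j = 0 := (fin2_eq_zero_iff _).mpr hj
          have h2 : f ((e.2 ⟨j, hj⟩) : Fin n) = 0 := (fin2_eq_zero_iff _).mpr (e.2 ⟨j, hj⟩).2
          rw [h1, h2]
      · rintro ⟨ρ, hρ⟩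
        apply Subtype.ext
        apply Equiv.ext
        intro j
        by_cases hj : g j = 1
        · have : (Equiv.sumCompl (fun j => g j = 1)).symm j = Sum.inl ⟨j, hj⟩ :=
            Equiv.sumCompl_symm_apply_of_pos (p := fun j => g j = 1) hj
          simp only [Equiv.trans_apply, this, Equiv.sumCongr_apply, Sum.map_inl,
            Equiv.sumCompl_apply_inl, Equiv.subtypeEquiv_apply]
        · have : (Equiv.sumCompl (fun j => g j = 1)).symm j = Sum.inr ⟨j, hj⟩ :=
            Equiv.sumCompl_symm_apply_of_neg (p := fun j => g j = 1) hj
          simp only [Equiv.trans_apply, this, Equiv.sumCongr_apply, Sum.map_inr,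
            Equiv.sumCompl_apply_inr, Equiv.subtypeEquiv_apply]
      · rintro ⟨e₁, e₂⟩
        have key : ∀ (j : Fin n) (hj : g j = 1),
            ((Equiv.sumCompl (fun j => g j = 1)).symm.trans
              (((e₁.sumCongr e₂)).trans (Equiv.sumCompl (fun i => f i = 1)))) j
              = ((e₁ ⟨j, hj⟩ : Fin n)) := by
          intro j hj
          have : (Equiv.sumCompl (fun j => g j = 1)).symm j = Sum.inl ⟨j, hj⟩ :=
            Equiv.sumCompl_symm_apply_of_pos (p := fun j => g j = 1) hj
          simp only [Equiv.trans_apply, this, Equiv.sumCongr_apply, Sum.map_inl,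
            Equiv.sumCompl_apply_inl]
        have key2 : ∀ (j : Fin n) (hj : ¬ g j = 1),
            ((Equiv.sumCompl (fun j => g j = 1)).symm.trans
              (((e₁.sumCongr e₂)).trans (Equiv.sumCompl (fun i => f i = 1)))) j
              = ((e₂ ⟨j, hj⟩ : Fin n)) := by
          intro j hj
          have : (Equiv.sumCompl (fun j => g j = 1)).symm j = Sum.inr ⟨j, hj⟩ :=
            Equiv.sumCompl_symm_apply_of_neg (p := fun j => g j = 1) hj
          simp only [Equiv.trans_apply, this, Equiv.sumCongr_apply, Sum.map_inr,
            Equiv.sumCompl_apply_inr]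
        apply Prod.ext
        · apply Equiv.ext
          rintro ⟨j, hj⟩
          apply Subtype.ext
          simp only [Equiv.subtypeEquiv_apply]
          rw [key j hj]
        · apply Equiv.ext
          rintro ⟨j, hj⟩
          apply Subtype.ext
          simp only [Equiv.subtypeEquiv_apply]
          rw [key2 j hj]
    rw [← Fintype.card_subtype, Fintype.card_congr E, Fintype.card_prod]
    have hc2 : Fintype.card {i : Fin n // f i = 1} = Fintype.card {j : Fin n // g j = 1} := by
      rw [Fintype.card_subtype, Fintype.card_subtype, ← hkf, ← hkg, heq]
    have hc3 : Fintype.card {i : Fin n // ¬ f i = 1} = Fintype.card {j : Fin n // ¬ g j = 1} := by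
      rw [Fintype.card_subtype_compl, Fintype.card_subtype_compl, hc2]
    rw [Fintype.card_equiv (Fintype.equivOfCardEq hc2.symm),
      Fintype.card_equiv (Fintype.equivOfCardEq hc3.symm)]
    rw [Fintype.card_subtype, Fintype.card_subtype_compl, Fintype.card_subtype, Fintype.card_fin]
  · rw [if_neg heq]
    rw [Finset.card_eq_zero, Finset.filter_eq_empty_iff]
    intro ρ _
    intro hρ
    apply heq
    have himg : (Finset.univ.filter fun j => f j = 1)
        = (Finset.univ.filter fun j => g j = 1).image ρ := by
      ext x
      simp only [Finset.mem_filter, Finset.mem_univ, true_and, Finset.mem_image]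
      constructor
      · intro hx
        refine ⟨ρ.symm x, ?_, by simp⟩
        rw [hρ (ρ.symm x)]
        simpa using hx
      · rintro ⟨j, hj, rfl⟩
        rw [← hρ j]
        exact hj
    rw [hkf, hkg, himg, Finset.card_image_of_injective _ ρ.injective]

end PermCount
section WWdag

variable {twoJ L : ℕ}

lemma WWdag : Wmat twoJ L * (Wmat twoJ L)ᴴ = Psym twoJ L := by
  ext σ τ
  rw [Matrix.mul_apply]
  simp_rw [Matrix.conjTranspose_apply, Wmat_star]
  -- LHS evaluation
  set v₀ : Fin L → Fin (twoJ+1) := fun α => ⟨cnt σ α, Nat.lt_succ_of_le (cnt_le σ α)⟩ with hv₀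
  have hLHS : ∑ v : Fin L → Fin (twoJ+1), Wmat twoJ L σ v * Wmat twoJ L τ v
      = if (∀ α, cnt τ α = cnt σ α) then ((wfac v₀ * wfac v₀ : ℝ) : ℂ) else 0 := by
    rw [Finset.sum_eq_single v₀]
    · rw [Wmat, Matrix.of_apply, Matrix.of_apply, if_pos (fun α => rfl)]
      by_cases h : ∀ α, cnt τ α = cnt σ α
      · rw [if_pos (fun α => h α), if_pos h, Complex.ofReal_mul]
      · rw [if_neg (fun hh => h (fun α => hh α)), if_neg h, mul_zero]
    · intro v _ hv
      rw [Wmat, Matrix.of_apply]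
      rw [if_neg, zero_mul]
      intro hcond
      apply hv
      funext α
      apply Fin.ext
      exact (hcond α).symm
    · intro habs
      exact absurd (Finset.mem_univ v₀) habs
  rw [hLHS]
  -- RHS evaluation
  rw [Psym, Matrix.smul_apply, Matrix.sum_apply]
  have hsplit : ∀ π : Fin L → Equiv.Perm (Fin twoJ),
      (Matrix.of fun σ' τ' =>
        if (∀ p : Fin L × Fin twoJ, τ' p = σ' (p.1, (π p.1) p.2)) then (1:ℂ) else 0) σ τ
      = ∏ α, if (∀ j, τ (α, j) = σ (α, (π α) j)) then (1:ℂ) else 0 := by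
    intro π
    rw [Matrix.of_apply, Finset.prod_boole]
    congr 1
    simp only [eq_iff_iff]
    constructor
    · intro h α _
      intro j
      exact h (α, j)
    · intro h p
      exact h p.1 (Finset.mem_univ _) p.2
  simp_rw [hsplit]
  have hfactor := Finset.prod_univ_sum (fun _ : Fin L => (Finset.univ : Finset (Equiv.Perm (Fin twoJ))))
    (fun α ρ => if (∀ j, τ (α, j) = σ (α, ρ j)) then (1:ℂ) else 0)
  rw [Fintype.piFinset_univ] at hfactor
  rw [← hfactor]
  have hper : ∀ α : Fin L, (∑ ρ : Equiv.Perm (Fin twoJ),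
      if (∀ j, τ (α, j) = σ (α, ρ j)) then (1:ℂ) else 0)
      = if cnt σ α = cnt τ α
        then (((cnt τ α).factorial * (twoJ - cnt τ α).factorial : ℕ) : ℂ) else 0 := by
    intro α
    rw [Finset.sum_boole]
    have := card_perm_map twoJ (fun j => σ (α, j)) (fun j => τ (α, j))
    rw [this]
    rw [apply_ite (Nat.cast (R := ℂ))]
    simp only [Nat.cast_zero, cnt]
    congr
  simp_rw [hper]
  by_cases hall : ∀ α, cnt τ α = cnt σ α
  · rw [if_pos hall]
    have hprodpos : ∀ α ∈ Finset.univ, (if cnt σ α = cnt τ α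
        then (((cnt τ α).factorial * (twoJ - cnt τ α).factorial : ℕ) : ℂ) else 0)
        = (((cnt σ α).factorial * (twoJ - cnt σ α).factorial : ℕ) : ℂ) := by
      intro α _
      simp [hall α]
    rw [Finset.prod_congr rfl hprodpos]
    have hsq : (wfac (twoJ := twoJ) v₀ * wfac v₀ : ℝ)
        = (∏ α, (Nat.choose twoJ (cnt σ α) : ℝ))⁻¹ := by
      rw [wfac_sq]
    rw [hsq]
    have hkey : (∏ α : Fin L, (Nat.choose twoJ (cnt σ α) : ℂ)) *
        (∏ α : Fin L, (((cnt σ α).factorial * (twoJ - cnt σ α).factorial : ℕ) : ℂ))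
        = ((Nat.factorial twoJ : ℂ)) ^ L := by
      rw [← Finset.prod_mul_distrib]
      rw [show ((Nat.factorial twoJ : ℂ)) ^ L
          = ∏ _α : Fin L, ((Nat.factorial twoJ : ℂ)) by
        rw [Finset.prod_const, Finset.card_univ, Fintype.card_fin]]
      apply Finset.prod_congr rfl
      intro α _
      have := Nat.choose_mul_factorial_mul_factorial (cnt_le σ α)
      push_cast [← this]
      ring
    have ha : (∏ α : Fin L, (Nat.choose twoJ (cnt σ α) : ℂ)) ≠ 0 := by
      apply Finset.prod_ne_zero_iff.mpr
      intro α _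
      have : 0 < Nat.choose twoJ (cnt σ α) := Nat.choose_pos (cnt_le σ α)
      exact_mod_cast Nat.pos_iff_ne_zero.mp this
    have hb : ((Nat.factorial twoJ : ℂ)) ^ L ≠ 0 := by
      apply pow_ne_zero
      exact_mod_cast Nat.factorial_ne_zero twoJ
    rw [smul_eq_mul]
    have hcast : ((((∏ α, (Nat.choose twoJ (cnt σ α) : ℝ)))⁻¹ : ℝ) : ℂ) =
        ((∏ α, (Nat.choose twoJ (cnt σ α) : ℂ)))⁻¹ := by
      push_cast
      rfl
    rw [hcast]
    apply inv_eq_of_mul_eq_one_right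
    field_simp
    push_cast at hkey ⊢
    linear_combination hkey
  · push_neg at hall
    obtain ⟨α₀, hα₀⟩ := hall
    rw [if_neg (by intro h; exact hα₀ (h α₀))]
    rw [Finset.prod_eq_zero (Finset.mem_univ α₀), smul_eq_mul, mul_zero]
    rw [if_neg (fun h => hα₀ h.symm)]

end WWdag
section Relabel

variable {twoJ L : ℕ}

/-- The site permutation induced by a family of rung permutations. -/
def rungEquiv (π : Fin L → Equiv.Perm (Fin twoJ)) : (Fin L × Fin twoJ) ≃ (Fin L × Fin twoJ) where
  toFun p := (p.1, π p.1 p.2)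
  invFun p := (p.1, (π p.1).symm p.2)
  left_inv p := by simp
  right_inv p := by simp

/-- The induced relabelling of configurations. -/
def cfgEquiv (π : Fin L → Equiv.Perm (Fin twoJ)) :
    (Fin L × Fin twoJ → Fin (1+1)) ≃ (Fin L × Fin twoJ → Fin (1+1)) where
  toFun σ := σ ∘ (rungEquiv π)
  invFun σ := σ ∘ (rungEquiv π).symm
  left_inv σ := by
    funext p
    simp
  right_inv σ := by
    funext p
    simp

lemma oneSite_submatrix {ι : Type*} [Fintype ι] [DecidableEq ι] {d : ℕ}
    (A : Matrix (Fin d) (Fin d) ℂ) (e : ι ≃ ι) (p : ι) :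
    (oneSite A p).submatrix (fun σ : ι → Fin d => σ ∘ e) (fun τ : ι → Fin d => τ ∘ e)
      = oneSite A (e p) := by
  ext σ τ
  rw [Matrix.submatrix_apply, oneSite, oneSite, Matrix.of_apply, Matrix.of_apply]
  simp only [Function.comp_apply]
  congr 1
  apply Finset.prod_nbij' (i := fun β => e β) (j := fun γ => e.symm γ)
  · intro β hβ
    simp only [Finset.mem_filter, Finset.mem_univ, true_and] at hβ ⊢
    exact fun hc => hβ (e.injective hc)
  · intro γ hγ
    simp only [Finset.mem_filter, Finset.mem_univ, true_and] at hγ ⊢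
    intro hc
    apply hγ
    rw [← hc, Equiv.apply_symm_apply]
  · intro β _
    exact e.symm_apply_apply β
  · intro γ _
    exact e.apply_symm_apply γ
  · intro β _
    rfl

lemma cfgEquiv_apply (π : Fin L → Equiv.Perm (Fin twoJ)) (σ : Fin L × Fin twoJ → Fin (1+1)) :
    cfgEquiv π σ = σ ∘ (rungEquiv π) := rfl

lemma hInt_submatrix (Δ : ℝ) (π : Fin L → Equiv.Perm (Fin twoJ))
    (p q : Fin L × Fin twoJ) :
    (hInt 1 Δ p q).submatrix (⇑(cfgEquiv π)) (⇑(cfgEquiv π))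
      = hInt 1 Δ ((rungEquiv π) p) ((rungEquiv π) q) := by
  have hos : ∀ (A : Matrix (Fin (1+1)) (Fin (1+1)) ℂ) (s : Fin L × Fin twoJ),
      (oneSite A s).submatrix (⇑(cfgEquiv π)) (⇑(cfgEquiv π)) = oneSite A ((rungEquiv π) s) :=
    fun A s => oneSite_submatrix A (rungEquiv π) s
  have hmul : ∀ (A B : Matrix (Fin (1+1)) (Fin (1+1)) ℂ) (s t : Fin L × Fin twoJ),
      (oneSite A s * oneSite B t).submatrix (⇑(cfgEquiv π)) (⇑(cfgEquiv π))
        = oneSite A ((rungEquiv π) s) * oneSite B ((rungEquiv π) t) := by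
    intro A B s t
    rw [← Matrix.submatrix_mul_equiv (oneSite A s) (oneSite B t)
      (⇑(cfgEquiv π)) (cfgEquiv π) (⇑(cfgEquiv π)), hos, hos]
  unfold hInt
  simp only [Matrix.submatrix_add, Matrix.submatrix_sub, Matrix.submatrix_smul,
    Pi.add_apply, Pi.sub_apply, Pi.smul_apply]
  rw [Matrix.submatrix_one_equiv (cfgEquiv π), hmul, hmul, hmul, hos, hos]

lemma cnt_cfgEquiv (π : Fin L → Equiv.Perm (Fin twoJ)) (σ : Fin L × Fin twoJ → Fin (1+1))
    (α : Fin L) : cnt (cfgEquiv π σ) α = cnt σ α := by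
  unfold cnt
  apply Finset.card_nbij' (i := fun j => π α j) (j := fun j => (π α).symm j)
  · intro j hj
    simp only [Finset.mem_coe, Finset.mem_filter, Finset.mem_univ, true_and] at hj ⊢
    exact hj
  · intro j hj
    simp only [Finset.mem_coe, Finset.mem_filter, Finset.mem_univ, true_and] at hj ⊢
    show σ ((rungEquiv π) (α, (π α).symm j)) = 1
    show σ (α, π α ((π α).symm j)) = 1
    rw [Equiv.apply_symm_apply]
    exact hj
  · intro j _
    exact (π α).symm_apply_apply j
  · intro j _
    exact (π α).apply_symm_apply j

lemma Wmat_submatrix (π : Fin L → Equiv.Perm (Fin twoJ)) :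
    (Wmat twoJ L).submatrix (⇑(cfgEquiv π)) id = Wmat twoJ L := by
  ext τ v
  rw [Matrix.submatrix_apply, Wmat, Matrix.of_apply, Matrix.of_apply, id]
  congr 1
  simp only [eq_iff_iff]
  constructor
  · intro h α
    rw [← cnt_cfgEquiv π τ α]
    exact h α
  · intro h α
    rw [cnt_cfgEquiv π τ α]
    exact h α

lemma WHW_eq (Δ : ℝ) (π : Fin L → Equiv.Perm (Fin twoJ)) (p q : Fin L × Fin twoJ) :
    (Wmat twoJ L)ᴴ * hInt 1 Δ ((rungEquiv π) p) ((rungEquiv π) q) * Wmat twoJ L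
      = (Wmat twoJ L)ᴴ * hInt 1 Δ p q * Wmat twoJ L := by
  have hW : (Wmat twoJ L).submatrix (⇑(cfgEquiv π)) id = Wmat twoJ L := Wmat_submatrix π
  have hWd : ((Wmat twoJ L)ᴴ).submatrix id (⇑(cfgEquiv π)) = (Wmat twoJ L)ᴴ := by
    rw [← Matrix.conjTranspose_submatrix, hW]
  calc (Wmat twoJ L)ᴴ * hInt 1 Δ ((rungEquiv π) p) ((rungEquiv π) q) * Wmat twoJ L
      = ((Wmat twoJ L)ᴴ).submatrix id (⇑(cfgEquiv π))
          * (hInt 1 Δ p q).submatrix (⇑(cfgEquiv π)) (⇑(cfgEquiv π))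
          * (Wmat twoJ L).submatrix (⇑(cfgEquiv π)) id := by
        rw [hInt_submatrix, hW, hWd]
    _ = (Wmat twoJ L)ᴴ * hInt 1 Δ p q * Wmat twoJ L := by
        rw [Matrix.submatrix_mul_equiv _ _ _ (cfgEquiv π) _,
          Matrix.submatrix_mul_equiv _ _ _ (cfgEquiv π) _, Matrix.submatrix_id_id]

lemma WHW_eq' (Δ : ℝ) (π : Fin L → Equiv.Perm (Fin twoJ)) (p q p' q' : Fin L × Fin twoJ)
    (hp : (rungEquiv π) p = p') (hq : (rungEquiv π) q = q') :
    (Wmat twoJ L)ᴴ * hInt 1 Δ p' q' * Wmat twoJ L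
      = (Wmat twoJ L)ᴴ * hInt 1 Δ p q * Wmat twoJ L := by
  subst hp
  subst hq
  exact WHW_eq Δ π p q

lemma WhPair (Δ : ℝ) (x x' : Fin L) (hxx' : x ≠ x') (j k : Fin twoJ) :
    (Wmat twoJ L)ᴴ * hInt 1 Δ ((x, j) : Fin L × Fin twoJ) ((x', k)) * Wmat twoJ L
      = (Wmat twoJ L)ᴴ * hInt 1 Δ ((x, j) : Fin L × Fin twoJ) ((x', j)) * Wmat twoJ L := by
  refine WHW_eq' Δ (fun α => if α = x' then Equiv.swap j k else 1) _ _ _ _ ?_ ?_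
  · show ((x : Fin L), (if x = x' then Equiv.swap j k else 1) j) = (x, j)
    rw [if_neg hxx']
    rfl
  · show ((x' : Fin L), (if x' = x' then Equiv.swap j k else 1) j) = (x', k)
    rw [if_pos rfl, Equiv.swap_apply_left]

lemma WHdecW (Δ : ℝ) :
    (twoJ : ℂ) • ((Wmat twoJ L)ᴴ * Hdec twoJ L Δ * Wmat twoJ L)
      = (Wmat twoJ L)ᴴ * Hladder twoJ L Δ * Wmat twoJ L := by
  rw [Hdec, Hladder]
  simp only [Matrix.mul_sum, Matrix.sum_mul]
  rw [Finset.smul_sum]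
  apply Finset.sum_congr rfl
  intro x _
  rw [Finset.smul_sum]
  apply Finset.sum_congr rfl
  intro j _
  by_cases h : (x : ℕ) + 1 < L
  · simp only [dif_pos h]
    have hxx' : x ≠ (⟨(x:ℕ)+1, h⟩ : Fin L) := by
      intro he
      have := congrArg Fin.val he
      simp at this
    have hconst : (∑ k : Fin twoJ, (Wmat twoJ L)ᴴ *
          hInt 1 Δ ((x, j) : Fin L × Fin twoJ) ((⟨(x:ℕ)+1, h⟩ : Fin L), k) * Wmat twoJ L)
        = ∑ _k : Fin twoJ, (Wmat twoJ L)ᴴ *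
          hInt 1 Δ ((x, j) : Fin L × Fin twoJ) ((⟨(x:ℕ)+1, h⟩ : Fin L), j) * Wmat twoJ L :=
      Finset.sum_congr rfl (fun k _ => WhPair Δ x _ hxx' j k)
    rw [hconst, Finset.sum_const, Finset.card_univ, Fintype.card_fin,
      ← Nat.cast_smul_eq_nsmul ℂ]
  · simp only [dif_neg h]
    simp

end Relabel
section IpLemmas

lemma ip_mulVec_left {m n : Type*} [Fintype m] [Fintype n] (M : Matrix m n ℂ)
    (x : n → ℂ) (y : m → ℂ) :
    ip (M.mulVec x) y = ip x (Mᴴ.mulVec y) := by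
  unfold ip
  simp_rw [Matrix.mulVec, dotProduct, Matrix.conjTranspose_apply, map_sum,
    Finset.sum_mul, Finset.mul_sum]
  rw [Finset.sum_comm]
  apply Finset.sum_congr rfl
  intro i _
  apply Finset.sum_congr rfl
  intro j _
  rw [_root_.map_mul]
  simp only [Complex.star_def]
  ring

lemma star_ip {n : Type*} [Fintype n] (x y : n → ℂ) : star (ip x y) = ip y x := by
  unfold ip
  rw [star_sum]
  apply Finset.sum_congr rfl
  intro i _
  rw [star_mul']
  simp [mul_comm]

lemma ip_smul_right {n : Type*} [Fintype n] (c : ℂ) (x y : n → ℂ) :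
    ip x (c • y) = c * ip x y := by
  unfold ip
  rw [Finset.mul_sum]
  apply Finset.sum_congr rfl
  intro i _
  simp
  ring

end IpLemmas

section Transfer

variable {twoJ L : ℕ}

lemma PsymW : Psym twoJ L * Wmat twoJ L = Wmat twoJ L := by
  rw [← WWdag, Matrix.mul_assoc, WdagW, Matrix.mul_one]

lemma WHdecW_chain (Δ : ℝ) :
    (twoJ : ℂ) • ((Wmat twoJ L)ᴴ * Hdec twoJ L Δ * Wmat twoJ L) = Hchain twoJ L Δ := by
  rw [WHdecW, W_Hladder, Matrix.mul_assoc, WdagW, Matrix.mul_one]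

lemma W_mulVec_inj (χ : (Fin L → Fin (twoJ+1)) → ℂ) (h : (Wmat twoJ L).mulVec χ = 0) :
    χ = 0 := by
  have : ((Wmat twoJ L)ᴴ * Wmat twoJ L).mulVec χ = 0 := by
    rw [← Matrix.mulVec_mulVec, h, Matrix.mulVec_zero]
  rwa [WdagW, Matrix.one_mulVec] at this

lemma ip_W_W (χ χ' : (Fin L → Fin (twoJ+1)) → ℂ) :
    ip ((Wmat twoJ L).mulVec χ) ((Wmat twoJ L).mulVec χ') = ip χ χ' := by
  rw [ip_mulVec_left, Matrix.mulVec_mulVec, WdagW, Matrix.one_mulVec]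

lemma ip_W_Hdec (Δ : ℝ) (χ : (Fin L → Fin (twoJ+1)) → ℂ) :
    (twoJ : ℝ) * (ip ((Wmat twoJ L).mulVec χ)
        ((Hdec twoJ L Δ).mulVec ((Wmat twoJ L).mulVec χ))).re
      = (ip χ ((Hchain twoJ L Δ).mulVec χ)).re := by
  have h1 : ip ((Wmat twoJ L).mulVec χ) ((Hdec twoJ L Δ).mulVec ((Wmat twoJ L).mulVec χ))
      = ip χ (((Wmat twoJ L)ᴴ * Hdec twoJ L Δ * Wmat twoJ L).mulVec χ) := by
    rw [ip_mulVec_left, Matrix.mulVec_mulVec, Matrix.mulVec_mulVec]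
  have h2 : ip χ ((Hchain twoJ L Δ).mulVec χ)
      = (twoJ : ℂ) * ip χ (((Wmat twoJ L)ᴴ * Hdec twoJ L Δ * Wmat twoJ L).mulVec χ) := by
    rw [← ip_smul_right, ← Matrix.smul_mulVec, WHdecW_chain]
  rw [h1, h2]
  rw [show ((twoJ : ℂ)) = ((twoJ : ℝ) : ℂ) by push_cast; ring]
  rw [Complex.re_ofReal_mul]

lemma sector_W (Mv : ℝ) (χ : (Fin L → Fin (twoJ+1)) → ℂ) (h : inSector twoJ Mv χ) :
    inSector 1 Mv ((Wmat twoJ L).mulVec χ) := by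
  unfold inSector at h ⊢
  rw [Matrix.mulVec_mulVec, S3tot_W, ← Matrix.mulVec_mulVec, h, Matrix.mulVec_smul]

lemma sector_Wdag (Mv : ℝ) (ψ : (Fin L × Fin twoJ → Fin (1+1)) → ℂ) (h : inSector 1 Mv ψ) :
    inSector twoJ Mv ((Wmat twoJ L)ᴴ.mulVec ψ) := by
  unfold inSector at h ⊢
  rw [Matrix.mulVec_mulVec, ← W_S3tot, ← Matrix.mulVec_mulVec, h, Matrix.mulVec_smul]

lemma kernel_W (Δ : ℝ) (χ : (Fin L → Fin (twoJ+1)) → ℂ)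
    (h : (Hchain twoJ L Δ).mulVec χ = 0) :
    (Hladder twoJ L Δ).mulVec ((Wmat twoJ L).mulVec χ) = 0 := by
  rw [Matrix.mulVec_mulVec, Hladder_W, ← Matrix.mulVec_mulVec, h, Matrix.mulVec_zero]

lemma kernel_Wdag (Δ : ℝ) (ψ : (Fin L × Fin twoJ → Fin (1+1)) → ℂ)
    (h : (Hladder twoJ L Δ).mulVec ψ = 0) :
    (Hchain twoJ L Δ).mulVec ((Wmat twoJ L)ᴴ.mulVec ψ) = 0 := by
  rw [Matrix.mulVec_mulVec, ← W_Hladder, ← Matrix.mulVec_mulVec, h, Matrix.mulVec_zero]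

end Transfer
lemma ip_W_left {twoJ L : ℕ} (χ : (Fin L → Fin (twoJ+1)) → ℂ)
    (φ : (Fin L × Fin twoJ → Fin (1+1)) → ℂ) :
    ip φ ((Wmat twoJ L).mulVec χ) = ip ((Wmat twoJ L)ᴴ.mulVec φ) χ := by
  calc ip φ ((Wmat twoJ L).mulVec χ)
      = star (ip ((Wmat twoJ L).mulVec χ) φ) := (star_ip _ _).symm
    _ = star (ip χ ((Wmat twoJ L)ᴴ.mulVec φ)) := by rw [ip_mulVec_left]
    _ = ip ((Wmat twoJ L)ᴴ.mulVec φ) χ := star_ip _ _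
/-- **Ladder representation of the spectral gap.**
`γ([1,L],J,M) = 2J · inf { ⟨Pψ, H̿ Pψ⟩/⟨Pψ,Pψ⟩ : ψ ∈ ℋ(Λ̃,M), Pψ ≠ 0, ψ ⊥ 𝒢(Λ̃,M) }`. -/
theorem gap_ladder_representation (twoJ L : ℕ) (h2J : 1 ≤ twoJ) (hL : 2 ≤ L)
    (Δ : ℝ) (hΔ : 1 < Δ) (M : ℝ)
    (hM : ∃ k : ℕ, k ≤ twoJ * L ∧ M = (k : ℝ) - ((twoJ * L : ℕ) : ℝ) / 2) :
    gap twoJ L Δ M = (twoJ : ℝ) *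
      sInf { r : ℝ | ∃ ψ : ((Fin L × Fin twoJ) → Fin (1 + 1)) → ℂ,
        inSector 1 M ψ ∧ (Psym twoJ L).mulVec ψ ≠ 0 ∧
        (∀ φ, inG twoJ L Δ M φ → ip φ ψ = 0) ∧
        r = (ip ((Psym twoJ L).mulVec ψ)
              ((Hdec twoJ L Δ).mulVec ((Psym twoJ L).mulVec ψ))).re /
            (ip ((Psym twoJ L).mulVec ψ) ((Psym twoJ L).mulVec ψ)).re } := by
  classical
  have hset : { r : ℝ | ∃ ψ : (Fin L → Fin (twoJ + 1)) → ℂ, ψ ≠ 0 ∧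
      inSector twoJ M ψ ∧
      (∀ φ : (Fin L → Fin (twoJ + 1)) → ℂ,
        (Hchain twoJ L Δ).mulVec φ = 0 → inSector twoJ M φ → ip φ ψ = 0) ∧
      r = (ip ψ ((Hchain twoJ L Δ).mulVec ψ)).re / (ip ψ ψ).re }
    = (twoJ : ℝ) • { r : ℝ | ∃ ψ : ((Fin L × Fin twoJ) → Fin (1 + 1)) → ℂ,
        inSector 1 M ψ ∧ (Psym twoJ L).mulVec ψ ≠ 0 ∧
        (∀ φ, inG twoJ L Δ M φ → ip φ ψ = 0) ∧
        r = (ip ((Psym twoJ L).mulVec ψ)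
              ((Hdec twoJ L Δ).mulVec ((Psym twoJ L).mulVec ψ))).re /
            (ip ((Psym twoJ L).mulVec ψ) ((Psym twoJ L).mulVec ψ)).re } := by
    ext r
    simp only [Set.mem_smul_set, Set.mem_setOf_eq]
    constructor
    · rintro ⟨χ, hχ0, hsec, horth, rfl⟩
      have hP : (Psym twoJ L).mulVec ((Wmat twoJ L).mulVec χ) = (Wmat twoJ L).mulVec χ := by
        rw [Matrix.mulVec_mulVec, PsymW]
      refine ⟨(ip ((Psym twoJ L).mulVec ((Wmat twoJ L).mulVec χ))
              ((Hdec twoJ L Δ).mulVec ((Psym twoJ L).mulVec ((Wmat twoJ L).mulVec χ)))).re /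
            (ip ((Psym twoJ L).mulVec ((Wmat twoJ L).mulVec χ))
              ((Psym twoJ L).mulVec ((Wmat twoJ L).mulVec χ))).re,
        ⟨(Wmat twoJ L).mulVec χ, sector_W M χ hsec, ?_, ?_, rfl⟩, ?_⟩
      · rw [hP]
        intro h0
        exact hχ0 (W_mulVec_inj χ h0)
      · rintro φ ⟨hker, hsecφ⟩
        rw [ip_W_left]
        exact horth _ (kernel_Wdag Δ φ hker) (sector_Wdag M φ hsecφ)
      · rw [hP, smul_eq_mul, ← mul_div_assoc, ip_W_Hdec, ip_W_W]
    · rintro ⟨r', ⟨ψ, hsec, hP0, horth, rfl⟩, rfl⟩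
      have hPψ : (Psym twoJ L).mulVec ψ = (Wmat twoJ L).mulVec ((Wmat twoJ L)ᴴ.mulVec ψ) := by
        rw [Matrix.mulVec_mulVec, WWdag]
      refine ⟨(Wmat twoJ L)ᴴ.mulVec ψ, ?_, sector_Wdag M ψ hsec, ?_, ?_⟩
      · intro h0
        apply hP0
        rw [hPψ, h0, Matrix.mulVec_zero]
      · intro φ hker hsecφ
        have hG : inG twoJ L Δ M ((Wmat twoJ L).mulVec φ) :=
          ⟨kernel_W Δ φ hker, sector_W M φ hsecφ⟩
        have h1 := horth _ hG
        calc ip φ ((Wmat twoJ L)ᴴ.mulVec ψ)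
            = star (ip ((Wmat twoJ L)ᴴ.mulVec ψ) φ) := (star_ip _ _).symm
          _ = star (ip ψ (((Wmat twoJ L)ᴴ)ᴴ.mulVec φ)) := by rw [ip_mulVec_left]
          _ = star (ip ψ ((Wmat twoJ L).mulVec φ)) := by
              rw [Matrix.conjTranspose_conjTranspose]
          _ = ip ((Wmat twoJ L).mulVec φ) ψ := star_ip _ _
          _ = 0 := h1
      · rw [hPψ, smul_eq_mul, ← mul_div_assoc, ip_W_Hdec, ip_W_W]
  rw [gap, hset, Real.sInf_smul_of_nonneg (by positivity), smul_eq_mul]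
end XXZ
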